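/- For any real γ > -1, ∫₀¹ dν / ((1+γν)³ √(ν(1-ν))) = π(8 + 8γ + 3γ²) / (8(1+γ)^{5/2}). -/

import Mathlib

open Real

lemma cube_hasDerivAt (γ : ℝ) (hγ : γ > -1) (x : ℝ) (hx0 : 0 < x) (hx1 : x < 1) :
    HasDerivAt (fun ν : ℝ =>
      (8 + 8*γ + 3*γ^2) / (4*(1+γ)^2 * Real.sqrt (1+γ)) *
        (Real.arcsin (Real.sqrt ν)
          + Real.arctan ((Real.sqrt (1+γ) - 1) * Real.sqrt (ν*(1-ν)) / ((1-ν) + Real.sqrt (1+γ) * ν)))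
      + Real.sqrt (ν*(1-ν)) * (γ*(5*γ+8)/(4*(1+γ)^2) + 3*γ^2*(γ+2)/(4*(1+γ)^2) * ν) / (1+γ*ν)^2)
      (1 / ((1 + γ*x)^3 * Real.sqrt (x*(1-x)))) x := by
  have h1γ : (0:ℝ) < 1 + γ := by linarith
  set a : ℝ := Real.sqrt (1+γ) with ha_def
  have ha0 : 0 < a := Real.sqrt_pos.2 h1γ
  have ha2 : a^2 = 1 + γ := Real.sq_sqrt h1γ.le
  set A : ℝ := (8 + 8*γ + 3*γ^2) / (4*(1+γ)^2 * a) with hA_def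
  set p : ℝ := γ*(5*γ+8)/(4*(1+γ)^2) with hp_def
  set q : ℝ := 3*γ^2*(γ+2)/(4*(1+γ)^2) with hq_def
  have hxx : 0 < x*(1-x) := mul_pos hx0 (by linarith)
  set S : ℝ := Real.sqrt (x*(1-x)) with hS_def
  have hS0 : 0 < S := Real.sqrt_pos.2 hxx
  have hS2 : S^2 = x*(1-x) := Real.sq_sqrt hxx.le
  have hγx : 0 < 1 + γ*x := by
    rcases le_or_gt 0 γ with h|h
    · nlinarith
    · nlinarith
  have hd0 : 0 < (1-x) + a*x := by nlinarith
  -- derivative of inner ν*(1-ν)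
  have hw : HasDerivAt (fun ν : ℝ => ν*(1-ν)) (1-2*x) x := by
    have h := (hasDerivAt_id x).mul ((hasDerivAt_const x (1:ℝ)).sub (hasDerivAt_id x))
    simp only [id_eq] at h
    exact h.congr_deriv (by simp only [Pi.sub_apply, id_eq]; ring)
  -- derivative of S function
  have hSd : HasDerivAt (fun ν : ℝ => Real.sqrt (ν*(1-ν))) (1/(2*S) * (1-2*x)) x := by
    have h := (Real.hasDerivAt_sqrt hxx.ne').comp x hw
    rw [← hS_def] at h
    exact h
  -- arcsin part
  have hsx0 : 0 < Real.sqrt x := Real.sqrt_pos.2 hx0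
  have hs1x0 : 0 < Real.sqrt (1-x) := Real.sqrt_pos.2 (by linarith)
  have harcsin : HasDerivAt (fun ν : ℝ => Real.arcsin (Real.sqrt ν)) (1/(2*S)) x := by
    have hne1 : Real.sqrt x ≠ -1 :=
      ne_of_gt (lt_of_lt_of_le (by norm_num) (Real.sqrt_nonneg x))
    have hne2 : Real.sqrt x ≠ 1 := by
      have h : Real.sqrt x < 1 := by
        rw [show (1:ℝ) = Real.sqrt 1 by simp]
        exact Real.sqrt_lt_sqrt hx0.le hx1
      linarith
    have h := (Real.hasDerivAt_arcsin hne1 hne2).comp x (Real.hasDerivAt_sqrt hx0.ne')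
    refine h.congr_deriv ?_
    rw [Real.sq_sqrt hx0.le, hS_def, Real.sqrt_mul hx0.le]
    field_simp
  -- arctan part
  have hdd : HasDerivAt (fun ν : ℝ => (1-ν) + a*ν) (a-1) x := by
    have h := ((hasDerivAt_const x (1:ℝ)).sub (hasDerivAt_id x)).add
      ((hasDerivAt_const x a).mul (hasDerivAt_id x))
    simp only [id_eq] at h
    exact h.congr_deriv (by ring)
  have hu : HasDerivAt (fun ν : ℝ => (a-1) * Real.sqrt (ν*(1-ν)) / ((1-ν) + a*ν))
      (((a-1) * (1/(2*S) * (1-2*x)) * ((1-x)+a*x) - (a-1)*S * (a-1)) / ((1-x)+a*x)^2) x :=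
    (hSd.const_mul (a-1)).div hdd hd0.ne'
  have harctan : HasDerivAt (fun ν : ℝ =>
      Real.arctan ((a-1) * Real.sqrt (ν*(1-ν)) / ((1-ν) + a*ν)))
      ((a - 1 - γ*x) / (2*S*(1+γ*x))) x := by
    have h := (Real.hasDerivAt_arctan ((a-1)*S/((1-x)+a*x))).comp x hu
    refine h.congr_deriv ?_
    have hpos : ((1-x)+a*x)^2 + (a-1)^2*S^2 = 1 + γ*x := by
      rw [hS2]; linear_combination x * ha2
    have key23 : (a-1)*((1-2*x)*((1-x)+a*x) - 2*(a-1)*S^2) = a - 1 - γ*x := by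
      rw [hS2]; linear_combination (-x) * ha2
    rw [← key23]
    have h1 : 1 + ((a-1)*S/((1-x)+a*x))^2 = (((1-x)+a*x)^2 + (a-1)^2*S^2)/((1-x)+a*x)^2 := by
      field_simp
    rw [h1, hpos]
    rw [one_div_div, div_mul_div_comm, div_eq_div_iff (by positivity) (by positivity)]
    field_simp
  -- rational part
  have hpq : HasDerivAt (fun ν : ℝ => p + q*ν) q x := by
    have h := (hasDerivAt_const x p).add ((hasDerivAt_const x q).mul (hasDerivAt_id x))
    simp only [id_eq] at h
    exact h.congr_deriv (by ring)
  have hden : HasDerivAt (fun ν : ℝ => (1+γ*ν)^2) ((2:ℕ)*(1+γ*x)^1*γ) x := by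
    have hb : HasDerivAt (fun ν : ℝ => 1+γ*ν) γ x := by
      have h := (hasDerivAt_const x (1:ℝ)).add ((hasDerivAt_const x γ).mul (hasDerivAt_id x))
      simp only [id_eq] at h
      exact h.congr_deriv (by ring)
    exact hb.pow 2
  have hrat : HasDerivAt (fun ν : ℝ => Real.sqrt (ν*(1-ν)) * (p + q*ν) / (1+γ*ν)^2)
      ((((1-2*x)*(p+q*x) + 2*S^2*q)*(1+γ*x) - 4*γ*S^2*(p+q*x)) / (2*S*(1+γ*x)^3)) x := by
    have h := (hSd.mul hpq).div hden (by positivity)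
    rw [← hS_def] at h
    refine h.congr_deriv ?_
    simp only [Pi.mul_apply, ← hS_def]
    push_cast
    field_simp [hS0.ne', hγx.ne']
    ring
  -- assemble
  have htot := ((harcsin.add harctan).const_mul A).add hrat
  refine htot.congr_deriv ?_
  have hAa : A * a = (8 + 8*γ + 3*γ^2)/(4*(1+γ)^2) := by
    rw [hA_def]; field_simp
  have master : A*a*(1+γ*x)^2 +
      (((1-2*x)*(p+q*x) + 2*(x*(1-x))*q)*(1+γ*x) - 4*γ*(x*(1-x))*(p+q*x)) = 2 := by
    rw [hAa, hp_def, hq_def]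
    field_simp
    ring
  have masterN : ((1-2*x)*(p+q*x) + 2*S^2*q)*(1+γ*x) - 4*γ*S^2*(p+q*x)
      = 2 - A*a*(1+γ*x)^2 := by
    rw [hS2]; linarith [master]
  rw [masterN]
  field_simp
  ring

lemma cube_integrable (γ : ℝ) (hγ : γ > -1) :
    IntervalIntegrable (fun ν : ℝ => 1 / ((1 + γ * ν) ^ 3 * Real.sqrt (ν * (1 - ν))))
      MeasureTheory.volume 0 1 := by
  have h1γ : (0:ℝ) < 1 + γ := by linarith
  set m : ℝ := min 1 (1+γ) with hm_def
  have hm : 0 < m := lt_min one_pos h1γ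
  have hm1 : ∀ ν ∈ Set.Icc (0:ℝ) 1, m ≤ 1 + γ * ν := by
    intro ν hν
    rcases le_or_gt 0 γ with h|h
    · refine le_trans (min_le_left _ _) ?_; nlinarith [hν.1]
    · refine le_trans (min_le_right _ _) ?_; nlinarith [hν.2]
  have hmeas : Measurable (fun ν : ℝ => 1 / ((1 + γ * ν) ^ 3 * Real.sqrt (ν * (1 - ν)))) := by
    fun_prop
  have part1 : IntervalIntegrable (fun ν : ℝ => 1 / ((1 + γ * ν) ^ 3 * Real.sqrt (ν * (1 - ν))))
      MeasureTheory.volume 0 (1/2) := by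
    apply IntervalIntegrable.mono_fun'
      (g := fun ν : ℝ => (2/m^3) * ν ^ (-(1/2) : ℝ))
    · exact (intervalIntegral.intervalIntegrable_rpow' (by norm_num)).const_mul _
    · exact (hmeas.aestronglyMeasurable).restrict
    · rw [Set.uIoc_of_le (by norm_num : (0:ℝ) ≤ 1/2)]
      filter_upwards [MeasureTheory.ae_restrict_mem measurableSet_Ioc] with ν hν
      have hν0 : 0 < ν := hν.1
      have hν2 : ν ≤ 1/2 := hν.2
      have hsν : 0 < Real.sqrt ν := Real.sqrt_pos.2 hν0
      have hb : m ≤ 1 + γ * ν := hm1 ν ⟨hν0.le, by linarith⟩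
      have h1 : m^3 ≤ (1 + γ*ν)^3 := pow_le_pow_left₀ hm.le hb 3
      have hq4 : Real.sqrt (ν/4) = Real.sqrt ν / 2 := by
        rw [show ν/4 = ν * (1/2)^2 by ring, Real.sqrt_mul hν0.le,
          Real.sqrt_sq (by norm_num : (0:ℝ) ≤ 1/2)]
        ring
      have h2 : Real.sqrt ν / 2 ≤ Real.sqrt (ν*(1-ν)) := by
        rw [← hq4]
        exact Real.sqrt_le_sqrt (by nlinarith)
      have hsmall : 0 < m^3 * (Real.sqrt ν / 2) := mul_pos (pow_pos hm 3) (by positivity)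
      have hbig : m^3 * (Real.sqrt ν / 2) ≤ (1 + γ*ν)^3 * Real.sqrt (ν*(1-ν)) :=
        mul_le_mul h1 h2 (by positivity) (pow_nonneg (le_trans hm.le hb) 3)
      have hfpos : (0:ℝ) ≤ 1 / ((1 + γ * ν) ^ 3 * Real.sqrt (ν * (1 - ν))) :=
        one_div_nonneg.2 (mul_nonneg (pow_nonneg (le_trans hm.le hb) 3) (Real.sqrt_nonneg _))
      rw [Real.norm_eq_abs, abs_of_nonneg hfpos]
      calc 1 / ((1 + γ * ν) ^ 3 * Real.sqrt (ν * (1 - ν)))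
          ≤ 1 / (m^3 * (Real.sqrt ν / 2)) := one_div_le_one_div_of_le hsmall hbig
        _ = (2/m^3) * ν ^ (-(1/2) : ℝ) := by
            rw [Real.rpow_neg hν0.le, ← Real.sqrt_eq_rpow]
            field_simp
  have part2 : IntervalIntegrable (fun ν : ℝ => 1 / ((1 + γ * ν) ^ 3 * Real.sqrt (ν * (1 - ν))))
      MeasureTheory.volume (1/2) 1 := by
    apply IntervalIntegrable.mono_fun'
      (g := fun ν : ℝ => (2/m^3) * (1-ν) ^ (-(1/2) : ℝ))
    · have h := (intervalIntegral.intervalIntegrable_rpow'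
        (r := -(1/2)) (by norm_num) (a := 0) (b := 1/2)).comp_sub_left 1
      norm_num at h
      exact (h.symm.const_mul _)
    · exact (hmeas.aestronglyMeasurable).restrict
    · rw [Set.uIoc_of_le (by norm_num : (1:ℝ)/2 ≤ 1)]
      filter_upwards [MeasureTheory.ae_restrict_mem measurableSet_Ioc] with ν hν
      have hν0 : 1/2 < ν := hν.1
      have hν1 : ν ≤ 1 := hν.2
      rcases eq_or_lt_of_le hν1 with heq | hlt
      · rw [heq]
        norm_num [Real.zero_rpow (show -(1/2:ℝ) ≠ 0 by norm_num)]
      · have h1ν : 0 < 1 - ν := by linarith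
        have hsν : 0 < Real.sqrt (1-ν) := Real.sqrt_pos.2 h1ν
        have hb : m ≤ 1 + γ * ν := hm1 ν ⟨by linarith, hν1⟩
        have h1 : m^3 ≤ (1 + γ*ν)^3 := pow_le_pow_left₀ hm.le hb 3
        have hq4 : Real.sqrt ((1-ν)/4) = Real.sqrt (1-ν) / 2 := by
          rw [show (1-ν)/4 = (1-ν) * (1/2)^2 by ring, Real.sqrt_mul h1ν.le,
            Real.sqrt_sq (by norm_num : (0:ℝ) ≤ 1/2)]
          ring
        have h2 : Real.sqrt (1-ν) / 2 ≤ Real.sqrt (ν*(1-ν)) := by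
          rw [← hq4]
          exact Real.sqrt_le_sqrt (by nlinarith)
        have hsmall : 0 < m^3 * (Real.sqrt (1-ν) / 2) := mul_pos (pow_pos hm 3) (by positivity)
        have hbig : m^3 * (Real.sqrt (1-ν) / 2) ≤ (1 + γ*ν)^3 * Real.sqrt (ν*(1-ν)) :=
          mul_le_mul h1 h2 (by positivity) (pow_nonneg (le_trans hm.le hb) 3)
        have hfpos : (0:ℝ) ≤ 1 / ((1 + γ * ν) ^ 3 * Real.sqrt (ν * (1 - ν))) :=
        one_div_nonneg.2 (mul_nonneg (pow_nonneg (le_trans hm.le hb) 3) (Real.sqrt_nonneg _))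
        rw [Real.norm_eq_abs, abs_of_nonneg hfpos]
        calc 1 / ((1 + γ * ν) ^ 3 * Real.sqrt (ν * (1 - ν)))
            ≤ 1 / (m^3 * (Real.sqrt (1-ν) / 2)) := one_div_le_one_div_of_le hsmall hbig
          _ = (2/m^3) * (1-ν) ^ (-(1/2) : ℝ) := by
              rw [Real.rpow_neg h1ν.le, ← Real.sqrt_eq_rpow]
              field_simp
  exact part1.trans part2

theorem integral_cube (γ : ℝ) (hγ : γ > -1) :
    ∫ ν in (0:ℝ)..1, 1 / ((1 + γ * ν) ^ 3 * Real.sqrt (ν * (1 - ν)))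
      = π * (8 + 8 * γ + 3 * γ ^ 2) / (8 * (1 + γ) ^ ((5:ℝ)/2)) := by
  have h1γ : (0:ℝ) < 1 + γ := by linarith
  have ha0 : 0 < Real.sqrt (1+γ) := Real.sqrt_pos.2 h1γ
  set F : ℝ → ℝ := fun ν : ℝ =>
      (8 + 8*γ + 3*γ^2) / (4*(1+γ)^2 * Real.sqrt (1+γ)) *
        (Real.arcsin (Real.sqrt ν)
          + Real.arctan ((Real.sqrt (1+γ) - 1) * Real.sqrt (ν*(1-ν)) / ((1-ν) + Real.sqrt (1+γ) * ν)))
      + Real.sqrt (ν*(1-ν)) * (γ*(5*γ+8)/(4*(1+γ)^2) + 3*γ^2*(γ+2)/(4*(1+γ)^2) * ν) / (1+γ*ν)^2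
    with hF_def
  have hcont : ContinuousOn F (Set.Icc 0 1) := by
    have c1 : Continuous (fun ν : ℝ => Real.arcsin (Real.sqrt ν)) :=
      Real.continuous_arcsin.comp Real.continuous_sqrt
    have cS : Continuous (fun ν : ℝ => Real.sqrt (ν*(1-ν))) :=
      Real.continuous_sqrt.comp (by continuity)
    have hdne : ∀ ν ∈ Set.Icc (0:ℝ) 1, (1-ν) + Real.sqrt (1+γ) * ν ≠ 0 := by
      intro ν hν
      have := hν.1; have := hν.2
      nlinarith [mul_nonneg ha0.le hν.1]
    have c2 : ContinuousOn
        (fun ν : ℝ => (Real.sqrt (1+γ) - 1) * Real.sqrt (ν*(1-ν)) / ((1-ν) + Real.sqrt (1+γ) * ν))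
        (Set.Icc 0 1) :=
      ((continuous_const.mul cS).continuousOn).div (by fun_prop) hdne
    have hγne : ∀ ν ∈ Set.Icc (0:ℝ) 1, ((1:ℝ)+γ*ν)^2 ≠ 0 := by
      intro ν hν
      have h : 0 < 1 + γ*ν := by
        rcases le_or_gt 0 γ with h|h
        · nlinarith [hν.1]
        · nlinarith [hν.2]
      positivity
    have c3 : ContinuousOn
        (fun ν : ℝ => Real.sqrt (ν*(1-ν)) * (γ*(5*γ+8)/(4*(1+γ)^2) + 3*γ^2*(γ+2)/(4*(1+γ)^2) * ν) / (1+γ*ν)^2)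
        (Set.Icc 0 1) :=
      ((cS.mul (by continuity)).continuousOn).div (by fun_prop) hγne
    exact (continuousOn_const.mul (c1.continuousOn.add
      (Real.continuous_arctan.comp_continuousOn c2))).add c3
  have hFTC := intervalIntegral.integral_eq_sub_of_hasDeriv_right_of_le
    (by norm_num : (0:ℝ) ≤ 1) hcont
    (fun x hx => (cube_hasDerivAt γ hγ x hx.1 hx.2).hasDerivWithinAt)
    (cube_integrable γ hγ)
  rw [hFTC]
  have hF0 : F 0 = 0 := by
    rw [hF_def]
    norm_num
  have hF1 : F 1 = (8 + 8*γ + 3*γ^2) / (4*(1+γ)^2 * Real.sqrt (1+γ)) * (π/2) := by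
    rw [hF_def]
    norm_num [Real.arcsin_one]
  rw [hF0, hF1]
  have hr : ((1:ℝ)+γ) ^ ((5:ℝ)/2) = (1+γ)^2 * Real.sqrt (1+γ) := by
    rw [show ((5:ℝ)/2) = ((2:ℕ):ℝ) + 1/2 by norm_num, Real.rpow_add h1γ,
      Real.rpow_natCast, ← Real.sqrt_eq_rpow]
  rw [hr]
  field_simp
  ring
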